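/- Let Ω₁ ⊆ ℝ^{N₁} and Ω₂ ⊆ ℝ^{N₂} be open sets. Suppose u : Ω₁ → ℝ is continuously differentiable with u and |∇u| square-integrable on Ω₁ and satisfies ∫_{Ω₁} ∇u·∇h dx = λ ∫_{Ω₁} u·h dx for every smooth compactly supported function h : ℝ^{N₁} → ℝ with support contained in Ω₁; and suppose s : Ω₂ → ℝ is continuously differentiable with s and |∇s| square-integrable on Ω₂ and is weakly harmonic, i.e. ∫_{Ω₂} ∇s·∇h dy = 0 for every smooth compactly supported h : ℝ^{N₂} → ℝ with support contained in Ω₂. Then the function w(x,y) = u(x)·s(y) satisfies ∫_{Ω₁×Ω₂} ∇w·∇h dx dy = λ ∫_{Ω₁×Ω₂} w·h dx dy for every smooth compactly supported function h : ℝ^{N₁}×ℝ^{N₂} → ℝ with support contained in Ω₁×Ω₂. -/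

import Mathlib

set_option maxHeartbeats 1000000


open MeasureTheory RealInnerProductSpace
open scoped ContDiff

section Aux

variable {E F : Type*} [NormedAddCommGroup E] [InnerProductSpace ℝ E]
  [NormedAddCommGroup F] [InnerProductSpace ℝ F] [CompleteSpace E] [CompleteSpace F]

omit [CompleteSpace F] in
lemma gradient_slice_fst {h : E × F → ℝ} (hd : Differentiable ℝ h) (x : E) (y : F) :
    gradient (fun x' => h (x', y)) x =
      (InnerProductSpace.toDual ℝ E).symm
        ((fderiv ℝ h (x, y)).comp (ContinuousLinearMap.inl ℝ E F)) := by
  have h1 : HasFDerivAt (fun x' => h (x', y))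
      ((fderiv ℝ h (x, y)).comp (ContinuousLinearMap.inl ℝ E F)) x :=
    (hd (x, y)).hasFDerivAt.comp x (hasFDerivAt_prodMk_left x y)
  exact h1.hasGradientAt.gradient

omit [CompleteSpace E] in
lemma gradient_slice_snd {h : E × F → ℝ} (hd : Differentiable ℝ h) (x : E) (y : F) :
    gradient (fun y' => h (x, y')) y =
      (InnerProductSpace.toDual ℝ F).symm
        ((fderiv ℝ h (x, y)).comp (ContinuousLinearMap.inr ℝ E F)) := by
  have h1 : HasFDerivAt (fun y' => h (x, y'))
      ((fderiv ℝ h (x, y)).comp (ContinuousLinearMap.inr ℝ E F)) y :=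
    (hd (x, y)).hasFDerivAt.comp y (hasFDerivAt_prodMk_right x y)
  exact h1.hasGradientAt.gradient

omit [CompleteSpace F] in
lemma gradient_mul_const' {u : E → ℝ} {x : E} (hx : DifferentiableAt ℝ u x) (c : ℝ) :
    gradient (fun x' => u x' * c) x = c • gradient u x := by
  have : fderiv ℝ (fun x' => u x' * c) x = c • fderiv ℝ u x := fderiv_mul_const hx c
  simp only [gradient, this, _root_.map_smul]

omit [CompleteSpace F] in
lemma gradient_const_mul' {u : E → ℝ} {x : E} (hx : DifferentiableAt ℝ u x) (c : ℝ) :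
    gradient (fun x' => c * u x') x = c • gradient u x := by
  have : fderiv ℝ (fun x' => c * u x') x = c • fderiv ℝ u x := fderiv_const_mul hx c
  simp only [gradient, this, _root_.map_smul]

omit [CompleteSpace F] in
lemma measurable_gradient (u : E → ℝ) [MeasurableSpace E] [BorelSpace E] :
    Measurable (gradient u) := by
  have : gradient u = fun x => (InnerProductSpace.toDual ℝ E).symm (fderiv ℝ u x) := rfl
  rw [this]
  exact (InnerProductSpace.toDual ℝ E).symm.continuous.measurable.comp (measurable_fderiv ℝ u)

lemma integrable_of_sq {α : Type*} [MeasurableSpace α] {μ : Measure α} [IsFiniteMeasure μ]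
    {f : α → ℝ} (hm : AEStronglyMeasurable f μ) (h2 : Integrable (fun x => f x ^ 2) μ) :
    Integrable f μ := by
  refine (h2.add (integrable_const 1)).mono' hm (ae_of_all _ fun x => ?_)
  have h0 := abs_nonneg (f x)
  simp only [Pi.add_apply, Real.norm_eq_abs]
  nlinarith [sq_abs (f x), sq_nonneg (|f x| - 1)]

end Aux

/-- The dot product `∇w · ∇h` at `p` of the gradients of two functions on
`ℝ^{N₁} × ℝ^{N₂}`: the gradient on the product is the pair of the gradients in the
`x`- and `y`-variables, and the inner product is the sum of the inner products of the
components. -/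
noncomputable def gradDotProd {N₁ N₂ : ℕ}
    (w h : EuclideanSpace ℝ (Fin N₁) × EuclideanSpace ℝ (Fin N₂) → ℝ)
    (p : EuclideanSpace ℝ (Fin N₁) × EuclideanSpace ℝ (Fin N₂)) : ℝ :=
  ⟪gradient (fun x => w (x, p.2)) p.1, gradient (fun x => h (x, p.2)) p.1⟫ +
    ⟪gradient (fun y => w (p.1, y)) p.2, gradient (fun y => h (p.1, y)) p.2⟫

/-- Suppose `u` is `C¹` on the open set `Ω₁ ⊆ ℝ^{N₁}`, with `u` and
`|∇u|` square-integrable on `Ω₁`, and satisfies the weak eigenequation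
`∫_{Ω₁} ∇u·∇h = λ ∫_{Ω₁} u·h` for all smooth compactly supported `h` with support in `Ω₁`;
and suppose `s` is `C¹` on the open set `Ω₂ ⊆ ℝ^{N₂}`, with `s` and `|∇s|`
square-integrable, and weakly harmonic on `Ω₂`.  Then `w(x,y) = u(x)·s(y)` satisfies
`∫_{Ω₁×Ω₂} ∇w·∇h = λ ∫_{Ω₁×Ω₂} w·h` for all smooth compactly supported `h` with support in
`Ω₁ × Ω₂`. -/
theorem dyad_weak_eigen_harmonic {N₁ N₂ : ℕ}
    (Ω₁ : Set (EuclideanSpace ℝ (Fin N₁))) (Ω₂ : Set (EuclideanSpace ℝ (Fin N₂)))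
    (hΩ₁ : IsOpen Ω₁) (hΩ₂ : IsOpen Ω₂)
    (u : EuclideanSpace ℝ (Fin N₁) → ℝ) (s : EuclideanSpace ℝ (Fin N₂) → ℝ)
    (lam : ℝ)
    (hu : ContDiffOn ℝ 1 u Ω₁) (hs : ContDiffOn ℝ 1 s Ω₂)
    (hu2 : IntegrableOn (fun x => u x ^ 2) Ω₁)
    (hgu2 : IntegrableOn (fun x => ‖gradient u x‖ ^ 2) Ω₁)
    (hs2 : IntegrableOn (fun y => s y ^ 2) Ω₂)
    (hgs2 : IntegrableOn (fun y => ‖gradient s y‖ ^ 2) Ω₂)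
    (hue : ∀ h : EuclideanSpace ℝ (Fin N₁) → ℝ, ContDiff ℝ ∞ h → HasCompactSupport h →
      tsupport h ⊆ Ω₁ →
      ∫ x in Ω₁, ⟪gradient u x, gradient h x⟫ = lam * ∫ x in Ω₁, u x * h x)
    (hse : ∀ h : EuclideanSpace ℝ (Fin N₂) → ℝ, ContDiff ℝ ∞ h → HasCompactSupport h →
      tsupport h ⊆ Ω₂ →
      ∫ y in Ω₂, ⟪gradient s y, gradient h y⟫ = 0) :
    ∀ h : EuclideanSpace ℝ (Fin N₁) × EuclideanSpace ℝ (Fin N₂) → ℝ,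
      ContDiff ℝ ∞ h → HasCompactSupport h → tsupport h ⊆ Ω₁ ×ˢ Ω₂ →
      ∫ p in Ω₁ ×ˢ Ω₂, gradDotProd (fun q => u q.1 * s q.2) h p =
        lam * ∫ p in Ω₁ ×ˢ Ω₂, (u p.1 * s p.2) * h p := by
  intro h hh hhc hhs
  classical
  have hΩ₁m : MeasurableSet Ω₁ := hΩ₁.measurableSet
  have hΩ₂m : MeasurableSet Ω₂ := hΩ₂.measurableSet
  have h1le : (1 : WithTop ℕ∞) ≤ ∞ := by exact_mod_cast le_top
  have hhd : Differentiable ℝ h := hh.differentiable (lt_of_lt_of_le zero_lt_one h1le).ne'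
  have hud : ∀ x ∈ Ω₁, DifferentiableAt ℝ u x := fun x hx =>
    (hu.differentiableOn one_ne_zero).differentiableAt (hΩ₁.mem_nhds hx)
  have hsd : ∀ y ∈ Ω₂, DifferentiableAt ℝ s y := fun y hy =>
    (hs.differentiableOn one_ne_zero).differentiableAt (hΩ₂.mem_nhds hy)
  -- compact support data
  have hKc : IsCompact (tsupport h) := hhc
  set K₁ := Prod.fst '' tsupport h with hK₁def
  set K₂ := Prod.snd '' tsupport h with hK₂def
  have hK₁c : IsCompact K₁ := hKc.image continuous_fst
  have hK₂c : IsCompact K₂ := hKc.image continuous_snd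
  have hK₁m : MeasurableSet K₁ := hK₁c.isClosed.measurableSet
  have hK₂m : MeasurableSet K₂ := hK₂c.isClosed.measurableSet
  have hKsub : tsupport h ⊆ K₁ ×ˢ K₂ := fun p hp => ⟨⟨p, hp, rfl⟩, ⟨p, hp, rfl⟩⟩
  -- bounds on h and its derivative
  obtain ⟨C, hC⟩ := (hhc.fderiv ℝ).exists_bound_of_continuous (hh.continuous_fderiv (lt_of_lt_of_le zero_lt_one h1le).ne')
  obtain ⟨Ch, hCh⟩ := hhc.exists_bound_of_continuous hh.continuous
  -- the slice identities from the weak equations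
  have hslice₁ : ∀ y : EuclideanSpace ℝ (Fin N₂),
      ∫ x in Ω₁, ⟪gradient u x, gradient (fun x' => h (x', y)) x⟫ =
        lam * ∫ x in Ω₁, u x * h (x, y) := by
    intro y
    have hsm : ContDiff ℝ ∞ (fun x => h (x, y)) := hh.comp (contDiff_id.prodMk contDiff_const)
    have hts : tsupport (fun x => h (x, y)) ⊆ {x | (x, y) ∈ tsupport h} := by
      apply closure_minimal
      · intro x hx
        have hx' : h (x, y) ≠ 0 := hx
        exact subset_tsupport h hx'
      · exact (isClosed_tsupport h).preimage (Continuous.prodMk_left y)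
    have hcs : HasCompactSupport (fun x => h (x, y)) := by
      refine IsCompact.of_isClosed_subset hK₁c (isClosed_tsupport _) (hts.trans ?_)
      intro x hx
      exact ⟨(x, y), hx, rfl⟩
    have htsub : tsupport (fun x => h (x, y)) ⊆ Ω₁ := hts.trans fun x hx => (hhs hx).1
    exact hue _ hsm hcs htsub
  have hslice₂ : ∀ x : EuclideanSpace ℝ (Fin N₁),
      ∫ y in Ω₂, ⟪gradient s y, gradient (fun y' => h (x, y')) y⟫ = 0 := by
    intro x
    have hsm : ContDiff ℝ ∞ (fun y => h (x, y)) := hh.comp (contDiff_const.prodMk contDiff_id)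
    have hts : tsupport (fun y => h (x, y)) ⊆ {y | (x, y) ∈ tsupport h} := by
      apply closure_minimal
      · intro y hy
        have hy' : h (x, y) ≠ 0 := hy
        exact subset_tsupport h hy'
      · exact (isClosed_tsupport h).preimage (Continuous.prodMk_right x)
    have hcs : HasCompactSupport (fun y => h (x, y)) := by
      refine IsCompact.of_isClosed_subset hK₂c (isClosed_tsupport _) (hts.trans ?_)
      intro y hy
      exact ⟨(x, y), hy, rfl⟩
    have htsub : tsupport (fun y => h (x, y)) ⊆ Ω₂ := hts.trans fun y hy => (hhs hy).2
    exact hse _ hsm hcs htsub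
  -- gradient representations of the slices of h
  have hG₁ : ∀ p : EuclideanSpace ℝ (Fin N₁) × EuclideanSpace ℝ (Fin N₂),
      gradient (fun x => h (x, p.2)) p.1 =
        (InnerProductSpace.toDual ℝ _).symm
          ((fderiv ℝ h p).comp (ContinuousLinearMap.inl ℝ _ _)) := fun p =>
    gradient_slice_fst hhd p.1 p.2
  have hG₂ : ∀ p : EuclideanSpace ℝ (Fin N₁) × EuclideanSpace ℝ (Fin N₂),
      gradient (fun y => h (p.1, y)) p.2 =
        (InnerProductSpace.toDual ℝ _).symm
          ((fderiv ℝ h p).comp (ContinuousLinearMap.inr ℝ _ _)) := fun p =>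
    gradient_slice_snd hhd p.1 p.2
  -- inner product rewrites
  have hinner₁ : ∀ p : EuclideanSpace ℝ (Fin N₁) × EuclideanSpace ℝ (Fin N₂),
      ⟪gradient u p.1, gradient (fun x => h (x, p.2)) p.1⟫ =
        fderiv ℝ h p (gradient u p.1, 0) := by
    intro p
    rw [hG₁ p, real_inner_comm, InnerProductSpace.toDual_symm_apply]
    rfl
  have hinner₂ : ∀ p : EuclideanSpace ℝ (Fin N₁) × EuclideanSpace ℝ (Fin N₂),
      ⟪gradient s p.2, gradient (fun y => h (p.1, y)) p.2⟫ =
        fderiv ℝ h p (0, gradient s p.2) := by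
    intro p
    rw [hG₂ p, real_inner_comm, InnerProductSpace.toDual_symm_apply]
    rfl
  -- pointwise identity on Ω₁ ×ˢ Ω₂
  have key : Set.EqOn (gradDotProd (fun q => u q.1 * s q.2) h)
      (fun p => s p.2 * ⟪gradient u p.1, gradient (fun x => h (x, p.2)) p.1⟫
        + u p.1 * ⟪gradient s p.2, gradient (fun y => h (p.1, y)) p.2⟫) (Ω₁ ×ˢ Ω₂) := by
    rintro p ⟨hp1, hp2⟩
    simp only [gradDotProd]
    rw [gradient_mul_const' (hud _ hp1) (s p.2), gradient_const_mul' (hsd _ hp2) (u p.1),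
      real_inner_smul_left, real_inner_smul_left]
  -- measures
  set μ₁ : Measure (EuclideanSpace ℝ (Fin N₁)) := volume.restrict Ω₁ with hμ₁def
  set μ₂ : Measure (EuclideanSpace ℝ (Fin N₂)) := volume.restrict Ω₂ with hμ₂def
  -- finite measure instances on the compact pieces
  haveI fin₁ : IsFiniteMeasure (volume.restrict (K₁ ∩ Ω₁)) :=
    ⟨by
      rw [Measure.restrict_apply_univ]
      exact lt_of_le_of_lt (measure_mono Set.inter_subset_left) hK₁c.measure_lt_top⟩
  haveI fin₂ : IsFiniteMeasure (volume.restrict (K₂ ∩ Ω₂)) :=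
    ⟨by
      rw [Measure.restrict_apply_univ]
      exact lt_of_le_of_lt (measure_mono Set.inter_subset_left) hK₂c.measure_lt_top⟩
  -- L¹ facts on the compact pieces
  have hu_m : AEStronglyMeasurable u (volume.restrict (K₁ ∩ Ω₁)) :=
    (hu.continuousOn.aestronglyMeasurable hΩ₁m).mono_measure
      (Measure.restrict_mono Set.inter_subset_right le_rfl)
  have hs_m : AEStronglyMeasurable s (volume.restrict (K₂ ∩ Ω₂)) :=
    (hs.continuousOn.aestronglyMeasurable hΩ₂m).mono_measure
      (Measure.restrict_mono Set.inter_subset_right le_rfl)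
  have hu1 : Integrable u (volume.restrict (K₁ ∩ Ω₁)) :=
    integrable_of_sq hu_m (hu2.mono_set Set.inter_subset_right)
  have hs1 : Integrable s (volume.restrict (K₂ ∩ Ω₂)) :=
    integrable_of_sq hs_m (hs2.mono_set Set.inter_subset_right)
  have hgu1 : Integrable (fun x => ‖gradient u x‖) (volume.restrict (K₁ ∩ Ω₁)) :=
    integrable_of_sq ((measurable_gradient u).norm.aestronglyMeasurable)
      (hgu2.mono_set Set.inter_subset_right)
  have hgs1 : Integrable (fun y => ‖gradient s y‖) (volume.restrict (K₂ ∩ Ω₂)) :=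
    integrable_of_sq ((measurable_gradient s).norm.aestronglyMeasurable)
      (hgs2.mono_set Set.inter_subset_right)
  -- product integrability of the bounds
  have hP1 : Integrable (fun p : EuclideanSpace ℝ (Fin N₁) × EuclideanSpace ℝ (Fin N₂) =>
      ‖gradient u p.1‖ * |s p.2|)
      ((volume.restrict (K₁ ∩ Ω₁)).prod (volume.restrict (K₂ ∩ Ω₂))) :=
    hgu1.mul_prod hs1.abs
  have hP2 : Integrable (fun p : EuclideanSpace ℝ (Fin N₁) × EuclideanSpace ℝ (Fin N₂) =>
      |u p.1| * ‖gradient s p.2‖)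
      ((volume.restrict (K₁ ∩ Ω₁)).prod (volume.restrict (K₂ ∩ Ω₂))) :=
    hu1.abs.mul_prod hgs1
  have hP3 : Integrable (fun p : EuclideanSpace ℝ (Fin N₁) × EuclideanSpace ℝ (Fin N₂) =>
      |u p.1| * |s p.2|)
      ((volume.restrict (K₁ ∩ Ω₁)).prod (volume.restrict (K₂ ∩ Ω₂))) :=
    hu1.abs.mul_prod hs1.abs
  -- indicator integrability transfer
  have hres : (μ₁.prod μ₂).restrict (K₁ ×ˢ K₂) =
      (volume.restrict (K₁ ∩ Ω₁)).prod (volume.restrict (K₂ ∩ Ω₂)) := by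
    rw [hμ₁def, hμ₂def, ← Measure.prod_restrict, Measure.restrict_restrict hK₁m,
      Measure.restrict_restrict hK₂m]
  have hind : ∀ g : EuclideanSpace ℝ (Fin N₁) × EuclideanSpace ℝ (Fin N₂) → ℝ,
      Integrable g ((volume.restrict (K₁ ∩ Ω₁)).prod (volume.restrict (K₂ ∩ Ω₂))) →
      Integrable ((K₁ ×ˢ K₂).indicator g) (μ₁.prod μ₂) := by
    intro g hg
    rw [integrable_indicator_iff (hK₁m.prod hK₂m), IntegrableOn, hres]
    exact hg
  -- measurability of the fderiv pairings
  have hdf_cont : Continuous (fderiv ℝ h) := hh.continuous_fderiv (lt_of_lt_of_le zero_lt_one h1le).ne'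
  have hmes₁ : Measurable (fun p : EuclideanSpace ℝ (Fin N₁) × EuclideanSpace ℝ (Fin N₂) =>
      fderiv ℝ h p (gradient u p.1, 0)) := by
    have hφ : Continuous (fun q : (EuclideanSpace ℝ (Fin N₁) × EuclideanSpace ℝ (Fin N₂)) ×
        EuclideanSpace ℝ (Fin N₁) => fderiv ℝ h q.1 (q.2, 0)) :=
      isBoundedBilinearMap_apply.continuous.comp
        ((hdf_cont.comp continuous_fst).prodMk (continuous_snd.prodMk continuous_const))
    exact hφ.measurable.comp
      (measurable_id.prodMk ((measurable_gradient u).comp measurable_fst))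
  have hmes₂ : Measurable (fun p : EuclideanSpace ℝ (Fin N₁) × EuclideanSpace ℝ (Fin N₂) =>
      fderiv ℝ h p (0, gradient s p.2)) := by
    have hφ : Continuous (fun q : (EuclideanSpace ℝ (Fin N₁) × EuclideanSpace ℝ (Fin N₂)) ×
        EuclideanSpace ℝ (Fin N₂) => fderiv ℝ h q.1 (0, q.2)) :=
      isBoundedBilinearMap_apply.continuous.comp
        ((hdf_cont.comp continuous_fst).prodMk (continuous_const.prodMk continuous_snd))
    exact hφ.measurable.comp
      (measurable_id.prodMk ((measurable_gradient s).comp measurable_snd))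
  -- vanishing of fderiv h off the support
  have hfd0 : ∀ p, p ∉ K₁ ×ˢ K₂ → fderiv ℝ h p = 0 := by
    intro p hp
    have hpK : p ∉ tsupport h := fun hmem => hp (hKsub hmem)
    by_contra h0
    exact hpK (support_fderiv_subset ℝ (by simpa [Function.mem_support] using h0))
  -- integrability of the three integrands
  have hF₁int : Integrable (fun p : EuclideanSpace ℝ (Fin N₁) × EuclideanSpace ℝ (Fin N₂) =>
      s p.2 * ⟪gradient u p.1, gradient (fun x => h (x, p.2)) p.1⟫) (μ₁.prod μ₂) := by
    have hF₁eq : (fun p : EuclideanSpace ℝ (Fin N₁) × EuclideanSpace ℝ (Fin N₂) =>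
        s p.2 * ⟪gradient u p.1, gradient (fun x => h (x, p.2)) p.1⟫) =
        fun p => s p.2 * fderiv ℝ h p (gradient u p.1, 0) := funext fun p => by rw [hinner₁ p]
    refine (hind _ ((hP1.const_mul C))).mono' ?_ (ae_of_all _ fun p => ?_)
    · rw [hF₁eq]
      exact ((hs.continuousOn.aestronglyMeasurable hΩ₂m).comp_snd).mul hmes₁.aestronglyMeasurable
    · by_cases hp : p ∈ K₁ ×ˢ K₂
      · rw [Set.indicator_of_mem hp, hinner₁ p]
        have hb : ‖fderiv ℝ h p (gradient u p.1, 0)‖ ≤ C * ‖gradient u p.1‖ := by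
          calc ‖fderiv ℝ h p (gradient u p.1, 0)‖
              ≤ ‖fderiv ℝ h p‖ * ‖((gradient u p.1, (0 : EuclideanSpace ℝ (Fin N₂))))‖ :=
                (fderiv ℝ h p).le_opNorm _
            _ = ‖fderiv ℝ h p‖ * ‖gradient u p.1‖ := by rw [Prod.norm_def]; simp
            _ ≤ C * ‖gradient u p.1‖ := mul_le_mul_of_nonneg_right (hC p) (norm_nonneg _)
        rw [norm_mul, Real.norm_eq_abs (s p.2)]
        calc |s p.2| * ‖fderiv ℝ h p (gradient u p.1, 0)‖
            ≤ |s p.2| * (C * ‖gradient u p.1‖) := mul_le_mul_of_nonneg_left hb (abs_nonneg _)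
          _ = C * (‖gradient u p.1‖ * |s p.2|) := by ring
      · rw [Set.indicator_of_notMem hp, hinner₁ p, hfd0 p hp]
        simp
  have hF₂int : Integrable (fun p : EuclideanSpace ℝ (Fin N₁) × EuclideanSpace ℝ (Fin N₂) =>
      u p.1 * ⟪gradient s p.2, gradient (fun y => h (p.1, y)) p.2⟫) (μ₁.prod μ₂) := by
    have hF₂eq : (fun p : EuclideanSpace ℝ (Fin N₁) × EuclideanSpace ℝ (Fin N₂) =>
        u p.1 * ⟪gradient s p.2, gradient (fun y => h (p.1, y)) p.2⟫) =
        fun p => u p.1 * fderiv ℝ h p (0, gradient s p.2) := funext fun p => by rw [hinner₂ p]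
    refine (hind _ ((hP2.const_mul C))).mono' ?_ (ae_of_all _ fun p => ?_)
    · rw [hF₂eq]
      exact ((hu.continuousOn.aestronglyMeasurable hΩ₁m).comp_fst).mul hmes₂.aestronglyMeasurable
    · by_cases hp : p ∈ K₁ ×ˢ K₂
      · rw [Set.indicator_of_mem hp, hinner₂ p]
        have hb : ‖fderiv ℝ h p (0, gradient s p.2)‖ ≤ C * ‖gradient s p.2‖ := by
          calc ‖fderiv ℝ h p (0, gradient s p.2)‖
              ≤ ‖fderiv ℝ h p‖ * ‖(((0 : EuclideanSpace ℝ (Fin N₁)), gradient s p.2))‖ :=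
                (fderiv ℝ h p).le_opNorm _
            _ = ‖fderiv ℝ h p‖ * ‖gradient s p.2‖ := by rw [Prod.norm_def]; simp
            _ ≤ C * ‖gradient s p.2‖ := mul_le_mul_of_nonneg_right (hC p) (norm_nonneg _)
        rw [norm_mul, Real.norm_eq_abs (u p.1)]
        calc |u p.1| * ‖fderiv ℝ h p (0, gradient s p.2)‖
            ≤ |u p.1| * (C * ‖gradient s p.2‖) := mul_le_mul_of_nonneg_left hb (abs_nonneg _)
          _ = C * (|u p.1| * ‖gradient s p.2‖) := by ring
      · rw [Set.indicator_of_notMem hp, hinner₂ p, hfd0 p hp]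
        simp
  have hwint : Integrable (fun p : EuclideanSpace ℝ (Fin N₁) × EuclideanSpace ℝ (Fin N₂) =>
      (u p.1 * s p.2) * h p) (μ₁.prod μ₂) := by
    refine (hind _ ((hP3.const_mul Ch))).mono' ?_ (ae_of_all _ fun p => ?_)
    · exact (((hu.continuousOn.aestronglyMeasurable hΩ₁m).comp_fst).mul
        ((hs.continuousOn.aestronglyMeasurable hΩ₂m).comp_snd)).mul
        hh.continuous.aestronglyMeasurable
    · by_cases hp : p ∈ K₁ ×ˢ K₂
      · rw [Set.indicator_of_mem hp]
        have h1 : |h p| ≤ Ch := by simpa [Real.norm_eq_abs] using hCh p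
        simp only [Real.norm_eq_abs, abs_mul]
        calc |u p.1| * |s p.2| * |h p| ≤ |u p.1| * |s p.2| * Ch :=
              mul_le_mul_of_nonneg_left h1 (by positivity)
          _ = Ch * (|u p.1| * |s p.2|) := by ring
      · rw [Set.indicator_of_notMem hp,
          image_eq_zero_of_notMem_tsupport (fun hmem => hp (hKsub hmem))]
        simp
  -- identify the restricted volume on the product with the product of restrictions
  have hvol : (volume : Measure (EuclideanSpace ℝ (Fin N₁) × EuclideanSpace ℝ (Fin N₂))).restrict
      (Ω₁ ×ˢ Ω₂) = μ₁.prod μ₂ := by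
    rw [hμ₁def, hμ₂def, Measure.volume_eq_prod _ _, Measure.prod_restrict]
  -- the second summand vanishes
  have h2zero : ∫ p, u p.1 * ⟪gradient s p.2, gradient (fun y => h (p.1, y)) p.2⟫ ∂(μ₁.prod μ₂)
      = 0 := by
    rw [integral_prod _ hF₂int]
    show (∫ x, ∫ y, u x * ⟪gradient s y, gradient (fun y' => h (x, y')) y⟫ ∂μ₂ ∂μ₁) = 0
    have hz : ∀ x, (∫ y, u x * ⟪gradient s y, gradient (fun y' => h (x, y')) y⟫ ∂μ₂) = 0 := by
      intro x
      rw [integral_const_mul, hslice₂ x, mul_zero]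
    simp only [hz, integral_zero]
  -- the first summand gives the eigenvalue identity
  have h1val : ∫ p, s p.2 * ⟪gradient u p.1, gradient (fun x => h (x, p.2)) p.1⟫ ∂(μ₁.prod μ₂)
      = lam * ∫ p, (u p.1 * s p.2) * h p ∂(μ₁.prod μ₂) := by
    rw [integral_prod_symm _ hF₁int, integral_prod_symm _ hwint]
    show (∫ y, ∫ x, s y * ⟪gradient u x, gradient (fun x' => h (x', y)) x⟫ ∂μ₁ ∂μ₂)
        = lam * ∫ y, ∫ x, (u x * s y) * h (x, y) ∂μ₁ ∂μ₂
    rw [← integral_const_mul]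
    have hy : ∀ y, ∫ x, s y * ⟪gradient u x, gradient (fun x' => h (x', y)) x⟫ ∂μ₁
        = lam * ∫ x, (u x * s y) * h (x, y) ∂μ₁ := by
      intro y
      rw [integral_const_mul, hslice₁ y]
      have e : ∫ x, (u x * s y) * h (x, y) ∂μ₁ = s y * ∫ x, u x * h (x, y) ∂μ₁ := by
        rw [← integral_const_mul]
        congr 1
        funext x
        ring
      rw [e]
      ring
    simp only [hy]
  -- put everything together
  calc ∫ p in Ω₁ ×ˢ Ω₂, gradDotProd (fun q => u q.1 * s q.2) h p
      = ∫ p in Ω₁ ×ˢ Ω₂, (s p.2 * ⟪gradient u p.1, gradient (fun x => h (x, p.2)) p.1⟫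
          + u p.1 * ⟪gradient s p.2, gradient (fun y => h (p.1, y)) p.2⟫) :=
        setIntegral_congr_fun (hΩ₁m.prod hΩ₂m) key
    _ = ∫ p, (s p.2 * ⟪gradient u p.1, gradient (fun x => h (x, p.2)) p.1⟫
          + u p.1 * ⟪gradient s p.2, gradient (fun y => h (p.1, y)) p.2⟫) ∂(μ₁.prod μ₂) := by
        rw [hvol]
    _ = (∫ p, s p.2 * ⟪gradient u p.1, gradient (fun x => h (x, p.2)) p.1⟫ ∂(μ₁.prod μ₂))
          + ∫ p, u p.1 * ⟪gradient s p.2, gradient (fun y => h (p.1, y)) p.2⟫ ∂(μ₁.prod μ₂) :=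
        integral_add hF₁int hF₂int
    _ = lam * ∫ p, (u p.1 * s p.2) * h p ∂(μ₁.prod μ₂) := by rw [h2zero, add_zero, h1val]
    _ = lam * ∫ p in Ω₁ ×ˢ Ω₂, (u p.1 * s p.2) * h p := by rw [hvol]
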